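/- Let μ, ν be coprime positive integers and γ > 0. Then the series ∑_{k ∈ ℕ, ν ∤ k} 1/(k^{1+γ}|sin(π k μ/ν)|) converges, and is bounded above by ∑_{l=1}^{ν-1} (1/|sin(π l μ/ν)|)·(1/l^{1+γ} + ζ(1+γ)/ν^{1+γ}). -/

import Mathlib

set_option maxHeartbeats 1000000

lemma absin_aux (μ ν : ℕ) (hν : 0 < ν) (q l : ℕ) :
    |Real.sin (Real.pi * ((q * ν + l : ℕ) : ℝ) * μ / ν)| = |Real.sin (Real.pi * l * μ / ν)| := by
  have hν' : (ν : ℝ) ≠ 0 := Nat.cast_ne_zero.mpr hν.ne'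
  have h : Real.pi * ((q * ν + l : ℕ) : ℝ) * μ / ν
      = Real.pi * l * μ / ν + ((q * μ : ℤ) : ℝ) * Real.pi := by
    push_cast; field_simp; ring
  rw [h, Real.sin_add_int_mul_pi, abs_mul]
  rw [← Int.natCast_mul, zpow_natCast]
  simp [abs_pow]

lemma sin_ne_zero_aux (μ ν : ℕ) (hcop : Nat.Coprime μ ν) (l : ℕ) (h1 : 0 < l) (h2 : l < ν) :
    Real.sin (Real.pi * l * μ / ν) ≠ 0 := by
  have hν' : (ν : ℝ) ≠ 0 := Nat.cast_ne_zero.mpr (by omega)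
  intro h
  rw [Real.sin_eq_zero_iff] at h
  obtain ⟨n, hn⟩ := h
  have hπ := Real.pi_ne_zero
  field_simp at hn
  have h2' : (n : ℝ) * ν = l * μ := by
    have h3 : Real.pi * ((n:ℝ) * ν) = Real.pi * ((l:ℝ) * μ) := by linear_combination Real.pi * hn
    exact mul_left_cancel₀ hπ h3
  have hz : n * (ν : ℤ) = (l : ℤ) * μ := by exact_mod_cast h2'
  have hdvd' : ν ∣ l * μ := by
    have : (ν : ℤ) ∣ (l : ℤ) * μ := ⟨n, by linarith [hz]⟩
    exact_mod_cast this
  have hd : ν ∣ l := (Nat.Coprime.dvd_of_dvd_mul_right hcop.symm) hdvd'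
  have := Nat.le_of_dvd h1 hd
  omega

theorem stmt_18 (μ ν : ℕ) (hμ : 0 < μ) (hν : 0 < ν) (hcop : Nat.Coprime μ ν) (γ : ℝ) (hγ : 0 < γ) :
    (Summable fun k : ℕ =>
        if ν ∣ (k + 1) then (0:ℝ)
        else 1 / (((k : ℝ) + 1) ^ (1 + γ) * |Real.sin (Real.pi * ((k : ℝ) + 1) * μ / ν)|)) ∧
      (∑' k : ℕ,
          if ν ∣ (k + 1) then (0:ℝ)
          else 1 / (((k : ℝ) + 1) ^ (1 + γ) * |Real.sin (Real.pi * ((k : ℝ) + 1) * μ / ν)|))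
        ≤ ∑ l ∈ Finset.Ico 1 ν,
            (1 / |Real.sin (Real.pi * (l : ℝ) * μ / ν)|) *
              (1 / (l : ℝ) ^ (1 + γ) + (∑' n : ℕ, ((n : ℝ) + 1) ^ (-(1 + γ))) / (ν : ℝ) ^ (1 + γ)) := by
  have hν' : (ν : ℝ) ≠ 0 := Nat.cast_ne_zero.mpr hν.ne'
  set p : ℝ := 1 + γ with hp
  have hp1 : 1 < p := by simp [hp]; linarith
  have hp0 : (0:ℝ) ≤ p := by linarith
  -- base summability
  have S0 : Summable (fun n : ℕ => ((n : ℝ) + 1) ^ (-p)) := by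
    have h1 : Summable (fun n : ℕ => ((n : ℝ)) ^ (-p)) :=
      Real.summable_nat_rpow.mpr (by linarith)
    have h2 := (summable_nat_add_iff 1).mpr h1
    simpa using h2
  set F : ℕ → ℝ := fun k =>
    if ν ∣ (k + 1) then (0:ℝ)
    else 1 / (((k : ℝ) + 1) ^ p * |Real.sin (Real.pi * ((k : ℝ) + 1) * μ / ν)|) with hF
  -- value of F
  have hsin_pos : ∀ l : ℕ, 0 < l → l < ν → 0 < |Real.sin (Real.pi * l * μ / ν)| :=
    fun l h1 h2 => abs_pos.mpr (sin_ne_zero_aux μ ν hcop l h1 h2)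
  have hFval : ∀ k : ℕ, ¬ ν ∣ (k + 1) →
      F k = (1 / |Real.sin (Real.pi * (((k+1) % ν : ℕ) : ℝ) * μ / ν)|) * ((k:ℝ)+1) ^ (-p) := by
    intro k hk
    have hk1 : ((k:ℝ) + 1) = ((k+1 : ℕ) : ℝ) := by push_cast; ring
    have hdecomp : k + 1 = ((k+1)/ν) * ν + (k+1) % ν := (Nat.div_add_mod' (k+1) ν).symm
    have habs : |Real.sin (Real.pi * ((k:ℝ)+1) * μ / ν)|
        = |Real.sin (Real.pi * (((k+1) % ν : ℕ) : ℝ) * μ / ν)| := by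
      rw [hk1]
      conv_lhs => rw [hdecomp]
      exact absin_aux μ ν hν _ _
    have hkpos : (0:ℝ) < (k:ℝ) + 1 := by positivity
    rw [hF]
    simp only [if_neg hk]
    rw [habs, Real.rpow_neg hkpos.le]
    field_simp
  have hFnonneg : ∀ k, 0 ≤ F k := by
    intro k
    rw [hF]
    dsimp only
    split <;> positivity
  -- constant bound
  set C : ℝ := ∑ l ∈ Finset.Ico 1 ν, 1 / |Real.sin (Real.pi * (l:ℝ) * μ / ν)| with hC
  have hFle : ∀ k, F k ≤ C * ((k:ℝ)+1) ^ (-p) := by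
    intro k
    by_cases hk : ν ∣ (k + 1)
    · rw [hF]; simp only [if_pos hk]
      have : (0:ℝ) ≤ C := Finset.sum_nonneg fun l _ => by positivity
      positivity
    · rw [hFval k hk]
      have hmem : (k+1) % ν ∈ Finset.Ico 1 ν := by
        rw [Finset.mem_Ico]
        constructor
        · rcases Nat.eq_zero_or_pos ((k+1) % ν) with h | h
          · exact absurd (Nat.dvd_of_mod_eq_zero h) hk
          · exact h
        · exact Nat.mod_lt _ hν
      have hle : 1 / |Real.sin (Real.pi * (((k+1) % ν : ℕ) : ℝ) * μ / ν)| ≤ C := by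
        rw [hC]
        exact Finset.single_le_sum (f := fun l : ℕ => 1 / |Real.sin (Real.pi * (l:ℝ) * μ / ν)|)
          (fun l _ => by positivity) hmem
      exact mul_le_mul_of_nonneg_right hle (by positivity)
  have hSF : Summable F :=
    Summable.of_nonneg_of_le hFnonneg hFle (S0.mul_left C)
  refine ⟨hSF, ?_⟩
  -- reindexing
  set ι := {l // l ∈ Finset.Ico 1 ν} × ℕ with hι
  set e : ι → ℕ := fun x => x.2 * ν + x.1.1 - 1 with he
  have hl_mem : ∀ x : ι, 1 ≤ x.1.1 ∧ x.1.1 < ν := fun x => Finset.mem_Ico.mp x.1.2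
  have he_add : ∀ x : ι, e x + 1 = x.2 * ν + x.1.1 := by
    intro x; have := (hl_mem x).1; simp only [he]; omega
  have he_inj : Function.Injective e := by
    intro x y hxy
    have hx := hl_mem x; have hy := hl_mem y
    have h1 : x.2 * ν + x.1.1 = y.2 * ν + y.1.1 := by
      have := he_add x; have := he_add y; omega
    have hmod : x.1.1 = y.1.1 := by
      have hx' : (x.2 * ν + x.1.1) % ν = x.1.1 := by
        rw [Nat.add_comm, Nat.add_mul_mod_self_right]; exact Nat.mod_eq_of_lt hx.2
      have hy' : (y.2 * ν + y.1.1) % ν = y.1.1 := by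
        rw [Nat.add_comm, Nat.add_mul_mod_self_right]; exact Nat.mod_eq_of_lt hy.2
      rw [← hx', ← hy', h1]
    have hq : x.2 = y.2 := by
      rw [hmod] at h1
      have := Nat.eq_of_mul_eq_mul_right hν (by omega : x.2 * ν = y.2 * ν)
      exact this
    exact Prod.ext (Subtype.ext hmod) hq
  have hrange : Function.support F ⊆ Set.range e := by
    intro k hk
    have hk' : ¬ ν ∣ (k + 1) := by
      intro h
      apply hk
      rw [hF]; simp only [if_pos h]
    have hmem : (k+1) % ν ∈ Finset.Ico 1 ν := by
      rw [Finset.mem_Ico]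
      refine ⟨?_, Nat.mod_lt _ hν⟩
      rcases Nat.eq_zero_or_pos ((k+1) % ν) with h | h
      · exact absurd (Nat.dvd_of_mod_eq_zero h) hk'
      · exact h
    refine ⟨(⟨⟨(k+1) % ν, hmem⟩, (k+1)/ν⟩ : ι), ?_⟩
    simp only [he]
    have h1 := (Finset.mem_Ico.mp hmem).1
    have h2 := Nat.div_add_mod' (k+1) ν
    omega
  have htsum_e : ∑' x : ι, F (e x) = ∑' k, F k := he_inj.tsum_eq hrange
  -- value after reindexing
  set G : ι → ℝ := fun x =>
    (1 / |Real.sin (Real.pi * (x.1.1 : ℝ) * μ / ν)|) * ((x.2 * ν + x.1.1 : ℕ) : ℝ) ^ (-p)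
    with hG
  have hFeG : ∀ x : ι, F (e x) = G x := by
    intro x
    obtain ⟨hl1, hl2⟩ := hl_mem x
    have hdvd : ¬ ν ∣ (e x + 1) := by
      rw [he_add x]
      intro h
      have : ν ∣ x.1.1 := (Nat.dvd_add_right (dvd_mul_left ν x.2)).mp h
      have := Nat.le_of_dvd (by omega) this
      omega
    have hmod : (e x + 1) % ν = x.1.1 := by
      rw [he_add x, Nat.add_comm, Nat.add_mul_mod_self_right]
      exact Nat.mod_eq_of_lt hl2
    have hcast : ((e x : ℝ) + 1) = ((x.2 * ν + x.1.1 : ℕ) : ℝ) := by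
      rw [← he_add x]; push_cast; ring
    rw [hFval _ hdvd, hG, hmod]
    dsimp only
    rw [hcast]
  have htsumFG : ∑' k, F k = ∑' x : ι, G x := by
    rw [← htsum_e]
    exact tsum_congr hFeG
  have hSG : Summable G := by
    have : Summable (F ∘ e) := hSF.comp_injective he_inj
    exact this.congr hFeG
  rw [htsumFG]
  rw [Summable.tsum_prod' hSG (fun b => hSG.prod_factor b)]
  rw [tsum_fintype]
  rw [← Finset.sum_attach (Finset.Ico 1 ν) (fun l =>
    (1 / |Real.sin (Real.pi * (l : ℝ) * μ / ν)|) *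
      (1 / (l : ℝ) ^ p + (∑' n : ℕ, ((n : ℝ) + 1) ^ (-p)) / (ν : ℝ) ^ p))]
  apply Finset.sum_le_sum
  intro l _
  obtain ⟨hl1, hl2⟩ := Finset.mem_Ico.mp l.2
  -- inner bound
  have hsum_a : Summable (fun q : ℕ => ((q * ν + l.1 : ℕ) : ℝ) ^ (-p)) := by
    apply S0.of_nonneg_of_le (fun q => by positivity)
    intro q
    apply Real.rpow_le_rpow_of_nonpos (by positivity)
    · push_cast
      have : (q : ℝ) * 1 + 1 ≤ (q:ℝ) * ν + l.1 := by
        have h1 : (1:ℝ) ≤ (ν:ℝ) := by exact_mod_cast hν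
        have h2 : (1:ℝ) ≤ (l.1:ℝ) := by exact_mod_cast hl1
        have h3 : (0:ℝ) ≤ (q:ℝ) := Nat.cast_nonneg q
        nlinarith
      linarith [this]
    · linarith
  have hGsplit : ∀ q : ℕ, G (l, q) =
      (1 / |Real.sin (Real.pi * (l.1 : ℝ) * μ / ν)|) * ((q * ν + l.1 : ℕ) : ℝ) ^ (-p) :=
    fun q => rfl
  calc ∑' q : ℕ, G (l, q)
      = (1 / |Real.sin (Real.pi * (l.1 : ℝ) * μ / ν)|) *
        ∑' q : ℕ, ((q * ν + l.1 : ℕ) : ℝ) ^ (-p) := by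
        simp_rw [hGsplit]; rw [tsum_mul_left]
    _ ≤ (1 / |Real.sin (Real.pi * (l.1 : ℝ) * μ / ν)|) *
        (1 / (l.1 : ℝ) ^ p + (∑' n : ℕ, ((n : ℝ) + 1) ^ (-p)) / (ν : ℝ) ^ p) := by
        apply mul_le_mul_of_nonneg_left _ (by positivity)
        -- split off first term
        rw [Summable.tsum_eq_zero_add hsum_a]
        have h0 : ((0 * ν + l.1 : ℕ) : ℝ) ^ (-p) = 1 / (l.1 : ℝ) ^ p := by
          have : (0 * ν + l.1 : ℕ) = l.1 := by omega
          rw [this, Real.rpow_neg (by positivity), one_div]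
        rw [h0]
        gcongr
        have hshift : Summable (fun q : ℕ => (((q+1) * ν + l.1 : ℕ) : ℝ) ^ (-p)) :=
          (summable_nat_add_iff 1).mpr hsum_a
        have hright : Summable (fun q : ℕ => (((q:ℝ)+1) * ν) ^ (-p)) := by
          have : ∀ q : ℕ, (((q:ℝ)+1) * ν) ^ (-p) = ((q:ℝ)+1) ^ (-p) * (ν:ℝ) ^ (-p) := by
            intro q
            rw [Real.mul_rpow (by positivity) (by positivity)]
          exact Summable.congr (S0.mul_right ((ν:ℝ) ^ (-p))) (fun q => (this q).symm)
        calc ∑' q : ℕ, (((q+1) * ν + l.1 : ℕ) : ℝ) ^ (-p)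
            ≤ ∑' q : ℕ, (((q:ℝ)+1) * ν) ^ (-p) := by
              apply Summable.tsum_le_tsum _ hshift hright
              intro q
              apply Real.rpow_le_rpow_of_nonpos (by positivity) _ (by linarith)
              push_cast
              have h2 : (1:ℝ) ≤ (l.1:ℝ) := by exact_mod_cast hl1
              linarith
          _ = (∑' n : ℕ, ((n : ℝ) + 1) ^ (-p)) / (ν : ℝ) ^ p := by
              have : ∀ q : ℕ, (((q:ℝ)+1) * ν) ^ (-p) = ((q:ℝ)+1) ^ (-p) * (ν:ℝ) ^ (-p) :=
                fun q => Real.mul_rpow (by positivity) (by positivity)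
              rw [tsum_congr this, tsum_mul_right, Real.rpow_neg (by positivity), div_eq_mul_inv]
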